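/- Let l > 0 and m ≥ 0 be real numbers and N ≥ 1 an integer, and set g_N(λ,t) = (1/(N-1)!) ∫_t^1 x^{lλ+m} (x-t)^{N-1} dx for 0 < t ≤ 1 and λ ∈ ℂ. Then: (i) for every fixed t ∈ (0,1], the function λ ↦ g_N(λ,t) is an entire function on ℂ; (ii) for every λ ∈ ℂ with Re λ > -(m+N+1)/l, the function t ↦ g_N(λ,t) is integrable on the interval (0,1]. -/

import Mathlib

open MeasureTheory Filter Set Metric
open scoped Topology Interval

/-- `g_N(λ,t) = (1/(N-1)!) ∫_t^1 x^(lλ+m) (x-t)^(N-1) dx` for `0 < t ≤ 1`. -/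
noncomputable def gN (l m : ℝ) (N : ℕ) (lam : ℂ) (t : ℝ) : ℂ :=
  (1 / (Nat.factorial (N - 1) : ℂ)) *
    ∫ x in Ioc t (1 : ℝ), (x : ℂ) ^ ((l : ℂ) * lam + (m : ℂ)) * ((x : ℂ) - (t : ℂ)) ^ (N - 1)

private lemma rpow_max_bound {t x e emin : ℝ} (ht0 : 0 < t) (ht1 : t ≤ 1) (htx : t ≤ x)
    (hx1 : x ≤ 1) (he : emin ≤ e) : x ^ e ≤ max 1 (t ^ emin) := by
  rcases le_or_gt 0 e with h | h
  · exact le_max_of_le_left (Real.rpow_le_one (ht0.le.trans htx) hx1 h)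
  · exact le_max_of_le_right ((Real.rpow_le_rpow_of_nonpos ht0 htx h.le).trans
      (Real.rpow_le_rpow_of_exponent_ge ht0 ht1 he))

/-- For `l > 0`, `m ≥ 0` and `N ≥ 1`:
(i) for every fixed `t ∈ (0,1]`, `λ ↦ g_N(λ,t)` is an entire function on `ℂ`;
(ii) for every `λ` with `Re λ > -(m+N+1)/l`, `t ↦ g_N(λ,t)` is integrable on `(0,1]`. -/
theorem stmt_2 (l m : ℝ) (hl : 0 < l) (hm : 0 ≤ m) (N : ℕ) (hN : 1 ≤ N) :
    (∀ t ∈ Ioc (0 : ℝ) 1, Differentiable ℂ (fun lam : ℂ => gN l m N lam t)) ∧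
    (∀ lam : ℂ, -(m + (N : ℝ) + 1) / l < lam.re →
      IntegrableOn (fun t : ℝ => gN l m N lam t) (Ioc 0 1)) := by
  constructor
  · -- Part (i)
    rintro t ⟨ht0, ht1⟩
    suffices h : Differentiable ℂ (fun lam : ℂ =>
        ∫ x in Ioc t (1 : ℝ), (x : ℂ) ^ ((l : ℂ) * lam + (m : ℂ)) * ((x : ℂ) - (t : ℂ)) ^ (N - 1)) by
      intro lam
      exact ((h lam).const_mul _)
    intro lam0
    haveI : IsFiniteMeasure (volume.restrict (Ioc t (1 : ℝ))) :=
      ⟨by rw [Measure.restrict_apply_univ]; exact measure_Ioc_lt_top⟩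
    set emin : ℝ := l * lam0.re + m - l with hemin
    set M : ℝ := max 1 (t ^ emin) with hM
    have hM0 : 0 ≤ M := le_trans zero_le_one (le_max_left _ _)
    -- continuity facts
    have hcpow : ∀ lam : ℂ, ContinuousOn
        (fun x : ℝ => (x : ℂ) ^ ((l : ℂ) * lam + (m : ℂ)) * ((x : ℂ) - (t : ℂ)) ^ (N - 1))
        (Ioc t 1) := by
      intro lam
      apply ContinuousOn.mul
      · intro x hx
        exact (Complex.continuousAt_ofReal_cpow_const x _
          (Or.inr (ne_of_gt (ht0.trans hx.1)))).continuousWithinAt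
      · exact ((Complex.continuous_ofReal.sub continuous_const).pow _).continuousOn
    have hclog : ContinuousOn (fun x : ℝ => Complex.log (x : ℂ)) (Ioc t 1) := by
      have h1 : ContinuousOn (fun x : ℝ => ((Real.log x : ℝ) : ℂ)) (Ioc t 1) :=
        Complex.continuous_ofReal.comp_continuousOn
          (Real.continuousOn_log.mono (fun x hx => by
            simp only [mem_compl_iff, mem_singleton_iff]
            exact ne_of_gt (ht0.trans hx.1)))
      exact h1.congr (fun x hx => (Complex.ofReal_log (ht0.trans hx.1).le).symm)
    -- norm bounds
    have hnorm : ∀ lam : ℂ, lam ∈ ball lam0 1 → ∀ x ∈ Ioc t (1 : ℝ),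
        ‖(x : ℂ) ^ ((l : ℂ) * lam + (m : ℂ))‖ ≤ M ∧
        ‖((x : ℂ) - (t : ℂ)) ^ (N - 1)‖ ≤ 1 := by
      intro lam hlam x hx
      have hx0 : (0 : ℝ) < x := ht0.trans hx.1
      constructor
      · have hre : ((l : ℂ) * lam + (m : ℂ)).re = l * lam.re + m := by
          simp [Complex.add_re, Complex.mul_re]
        rw [Complex.norm_cpow_eq_rpow_re_of_pos hx0, hre]
        apply rpow_max_bound ht0 ht1 hx.1.le hx.2
        have h1 : |lam.re - lam0.re| ≤ ‖lam - lam0‖ := by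
          simpa using Complex.abs_re_le_norm (lam - lam0)
        have h2 : ‖lam - lam0‖ < 1 := by
          simpa [Complex.dist_eq] using mem_ball.1 hlam
        have h3 : lam0.re - 1 ≤ lam.re := by
          have := abs_le.1 (h1.trans h2.le)
          linarith [this.1]
        rw [hemin]
        nlinarith
      · rw [norm_pow]
        apply pow_le_one₀ (norm_nonneg _)
        have heq : ((x : ℂ) - (t : ℂ)) = ((x - t : ℝ) : ℂ) := by push_cast; ring
        rw [heq, Complex.norm_real, Real.norm_eq_abs, abs_of_nonneg (by linarith [hx.1.le])]
        linarith [hx.2]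
    have hlogbd : ∀ x ∈ Ioc t (1 : ℝ), ‖Complex.log (x : ℂ)‖ ≤ |Real.log t| := by
      intro x hx
      have hx0 : (0 : ℝ) < x := ht0.trans hx.1
      rw [← Complex.ofReal_log hx0.le, Complex.norm_real, Real.norm_eq_abs]
      rw [abs_of_nonpos (Real.log_nonpos hx0.le hx.2),
        abs_of_nonpos (Real.log_nonpos ht0.le ht1)]
      have : Real.log t ≤ Real.log x := Real.log_le_log ht0 hx.1.le
      linarith
    -- apply dominated differentiation
    have key := hasDerivAt_integral_of_dominated_loc_of_deriv_le (μ := volume.restrict (Ioc t 1))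
      (F := fun lam x => (x : ℂ) ^ ((l : ℂ) * lam + (m : ℂ)) * ((x : ℂ) - (t : ℂ)) ^ (N - 1))
      (F' := fun lam x => ((l : ℂ) * Complex.log (x : ℂ)) *
        ((x : ℂ) ^ ((l : ℂ) * lam + (m : ℂ)) * ((x : ℂ) - (t : ℂ)) ^ (N - 1)))
      (x₀ := lam0) (s := ball lam0 1) (bound := fun _ => l * (|Real.log t| * (M * 1)))
      (ball_mem_nhds lam0 one_pos)
      (Eventually.of_forall fun lam => ((hcpow lam).aestronglyMeasurable measurableSet_Ioc))
      ?_ ?_ ?_ ?_ ?_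
    · exact key.2.differentiableAt
    · -- integrability of F lam0
      apply Integrable.mono' (integrable_const (M * 1))
      · exact (hcpow lam0).aestronglyMeasurable measurableSet_Ioc
      · filter_upwards [ae_restrict_mem measurableSet_Ioc] with x hx
        have h := hnorm lam0 (mem_ball_self one_pos) x hx
        rw [norm_mul]
        exact mul_le_mul h.1 h.2 (norm_nonneg _) hM0
    · -- measurability of F' lam0
      exact ((continuousOn_const.mul hclog).mul (hcpow lam0)).aestronglyMeasurable
        measurableSet_Ioc
    · -- bound
      filter_upwards [ae_restrict_mem measurableSet_Ioc] with x hx lam hlam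
      have h := hnorm lam hlam x hx
      have hL := hlogbd x hx
      calc ‖((l : ℂ) * Complex.log (x : ℂ)) *
            ((x : ℂ) ^ ((l : ℂ) * lam + (m : ℂ)) * ((x : ℂ) - (t : ℂ)) ^ (N - 1))‖
          = l * (‖Complex.log (x : ℂ)‖ * (‖(x : ℂ) ^ ((l : ℂ) * lam + (m : ℂ))‖ *
            ‖((x : ℂ) - (t : ℂ)) ^ (N - 1)‖)) := by
            simp [norm_mul, Complex.norm_real, abs_of_pos hl, mul_assoc]
        _ ≤ l * (|Real.log t| * (M * 1)) := by
            gcongr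
            all_goals first | exact hL | exact h.1 | exact h.2 | positivity
    · exact integrable_const _
    · -- differentiability
      filter_upwards [ae_restrict_mem measurableSet_Ioc] with x hx lam hlam
      have hx0 : (0 : ℝ) < x := ht0.trans hx.1
      have hxC : (x : ℂ) ≠ 0 := by
        simpa using ne_of_gt hx0
      have hcast : ∀ lam : ℂ, (x : ℂ) ^ ((l : ℂ) * lam + (m : ℂ)) =
          Complex.exp (Complex.log (x : ℂ) * ((l : ℂ) * lam + (m : ℂ))) := fun lam =>
        Complex.cpow_def_of_ne_zero hxC _
      have h1 : HasDerivAt (fun lam : ℂ => Complex.log (x : ℂ) * ((l : ℂ) * lam + (m : ℂ)))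
          (Complex.log (x : ℂ) * (l : ℂ)) lam := by
        simpa using (((hasDerivAt_id lam).const_mul (l : ℂ)).add_const ((m : ℂ))).const_mul
          (Complex.log (x : ℂ))
      have h2 := (h1.cexp).mul_const (((x : ℂ) - (t : ℂ)) ^ (N - 1))
      have hfun : (fun lam : ℂ => (x : ℂ) ^ ((l : ℂ) * lam + (m : ℂ)) *
          ((x : ℂ) - (t : ℂ)) ^ (N - 1)) = fun lam : ℂ =>
          Complex.exp (Complex.log (x : ℂ) * ((l : ℂ) * lam + (m : ℂ))) *
          ((x : ℂ) - (t : ℂ)) ^ (N - 1) := by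
        funext lam; rw [hcast]
      rw [hfun]
      have hval : ((l : ℂ) * Complex.log (x : ℂ)) *
          ((x : ℂ) ^ ((l : ℂ) * lam + (m : ℂ)) * ((x : ℂ) - (t : ℂ)) ^ (N - 1)) =
          Complex.exp (Complex.log (x : ℂ) * ((l : ℂ) * lam + (m : ℂ))) *
            (Complex.log (x : ℂ) * (l : ℂ)) * ((x : ℂ) - (t : ℂ)) ^ (N - 1) := by
        rw [hcast]; ring
      rw [hval]
      exact h2
  · -- Part (ii)
    intro lam hlam
    set c : ℂ := (l : ℂ) * lam + (m : ℂ) with hc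
    set s : ℝ := l * lam.re + m + ((N - 1 : ℕ) : ℝ) with hs
    set b : ℝ := min s (-(3 / 2)) with hb
    have hNcast : ((N - 1 : ℕ) : ℝ) = (N : ℝ) - 1 := by
      rw [Nat.cast_sub hN, Nat.cast_one]
    have hlre : -(m + (N : ℝ) + 1) < l * lam.re := by
      have := (div_lt_iff₀ hl).1 hlam
      linarith [this]
    have hs2 : -2 < s := by rw [hs, hNcast]; linarith
    have hb2 : -2 < b := lt_min hs2 (by norm_num)
    have hb32 : b ≤ -(3 / 2) := min_le_right _ _
    have hb1 : b + 1 < 0 := by linarith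
    have hbne : b ≠ -1 := by intro h; rw [h] at hb32; norm_num at hb32
    have hfact0 : (0 : ℝ) < (Nat.factorial (N - 1) : ℝ) := by
      exact_mod_cast Nat.factorial_pos _
    -- measurability
    have hmeas : AEStronglyMeasurable (fun t : ℝ => gN l m N lam t)
        (volume.restrict (Ioc 0 1)) := by
      set S : Set (ℝ × ℝ) := {p : ℝ × ℝ | p.1 < p.2 ∧ p.2 ≤ 1} with hS
      have hSm : MeasurableSet S :=
        (measurableSet_lt measurable_fst measurable_snd).inter
          (measurableSet_le measurable_snd measurable_const)
      have hf1 : Measurable (fun p : ℝ × ℝ => (p.2 : ℂ) ^ c) := by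
        have hmbase : Measurable (fun x : ℝ => (x : ℂ) ^ c) := by
          apply measurable_of_continuousOn_compl_singleton (0 : ℝ)
          intro x hx
          exact (Complex.continuousAt_ofReal_cpow_const x _
            (Or.inr (by simpa using hx))).continuousWithinAt
        exact hmbase.comp measurable_snd
      have hf2 : Measurable (fun p : ℝ × ℝ => ((p.2 : ℂ) - (p.1 : ℂ)) ^ (N - 1)) :=
        (((Complex.continuous_ofReal.comp continuous_snd).sub
          (Complex.continuous_ofReal.comp continuous_fst)).pow _).measurable
      have hf : StronglyMeasurable (S.indicator
          (fun p : ℝ × ℝ => (p.2 : ℂ) ^ c * ((p.2 : ℂ) - (p.1 : ℂ)) ^ (N - 1))) :=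
        ((hf1.mul hf2).indicator hSm).stronglyMeasurable
      have hint := hf.integral_prod_right' (ν := volume)
      have heq : (fun t : ℝ => gN l m N lam t) = fun t : ℝ =>
          (1 / (Nat.factorial (N - 1) : ℂ)) * ∫ x : ℝ, S.indicator
            (fun p : ℝ × ℝ => (p.2 : ℂ) ^ c * ((p.2 : ℂ) - (p.1 : ℂ)) ^ (N - 1)) (t, x) := by
        funext t
        rw [gN, ← integral_indicator measurableSet_Ioc]
        congr 1
      rw [heq]
      exact ((hint.const_mul _).aestronglyMeasurable).restrict
    -- norm bound
    have hbound : ∀ t ∈ Ioc (0 : ℝ) 1, ‖gN l m N lam t‖ ≤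
        (1 / (Nat.factorial (N - 1) : ℝ)) * ((-(b + 1))⁻¹ * t ^ (b + 1)) := by
      intro t ht
      have h0notin : (0 : ℝ) ∉ [[t, 1]] := by
        rw [uIcc_of_le ht.2]
        simp only [mem_Icc, not_and_or, not_le]
        exact Or.inl ht.1
      have hg : IntegrableOn (fun x : ℝ => x ^ b) (Ioc t 1) := by
        have h5 : IntervalIntegrable (fun x : ℝ => x ^ b) volume t 1 :=
          intervalIntegral.intervalIntegrable_rpow (Or.inr h0notin)
        exact (intervalIntegrable_iff_integrableOn_Ioc_of_le ht.2).1 h5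
      have hae : ∀ᵐ (x : ℝ) ∂(volume.restrict (Ioc t 1)),
          ‖(x : ℂ) ^ c * ((x : ℂ) - (t : ℂ)) ^ (N - 1)‖ ≤ x ^ b := by
        filter_upwards [ae_restrict_mem measurableSet_Ioc] with x hx
        have hx0 : (0 : ℝ) < x := ht.1.trans hx.1
        have h1 : ‖(x : ℂ) ^ c‖ = x ^ (l * lam.re + m) := by
          rw [Complex.norm_cpow_eq_rpow_re_of_pos hx0]
          congr 1
          simp [hc, Complex.add_re, Complex.mul_re]
        have h2 : ‖((x : ℂ) - (t : ℂ)) ^ (N - 1)‖ ≤ x ^ (N - 1 : ℕ) := by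
          rw [norm_pow]
          apply pow_le_pow_left₀ (norm_nonneg _)
          have heq : ((x : ℂ) - (t : ℂ)) = ((x - t : ℝ) : ℂ) := by push_cast; ring
          rw [heq, Complex.norm_real, Real.norm_eq_abs, abs_of_nonneg (by linarith [hx.1.le])]
          linarith [ht.1]
        calc ‖(x : ℂ) ^ c * ((x : ℂ) - (t : ℂ)) ^ (N - 1)‖
            = ‖(x : ℂ) ^ c‖ * ‖((x : ℂ) - (t : ℂ)) ^ (N - 1)‖ := norm_mul _ _
          _ ≤ x ^ (l * lam.re + m) * x ^ (N - 1 : ℕ) := by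
              rw [h1]
              exact mul_le_mul_of_nonneg_left h2 (Real.rpow_nonneg hx0.le _)
          _ = x ^ s := by
              rw [hs, ← Real.rpow_natCast x (N - 1), ← Real.rpow_add hx0]
          _ ≤ x ^ b := Real.rpow_le_rpow_of_exponent_ge hx0 hx.2 (min_le_left _ _)
      have hint : ‖∫ x in Ioc t 1, (x : ℂ) ^ c * ((x : ℂ) - (t : ℂ)) ^ (N - 1)‖ ≤
          ∫ x in Ioc t 1, x ^ b := norm_integral_le_of_norm_le hg hae
      have hval : ∫ x in Ioc t 1, x ^ b = (1 - t ^ (b + 1)) / (b + 1) := by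
        rw [← intervalIntegral.integral_of_le ht.2,
          integral_rpow (Or.inr ⟨hbne, h0notin⟩)]
        rw [Real.one_rpow]
      have hTnn : 0 ≤ t ^ (b + 1) := Real.rpow_nonneg ht.1.le _
      have hb1ne : b + 1 ≠ 0 := by intro h; apply hbne; linarith [h]
      have hstep : (1 - t ^ (b + 1)) / (b + 1) ≤ (-(b + 1))⁻¹ * t ^ (b + 1) := by
        rw [div_le_iff_of_neg hb1]
        have h4 : (-(b + 1))⁻¹ * t ^ (b + 1) * (b + 1) = -(t ^ (b + 1)) := by
          field_simp
        rw [h4]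
        linarith
      rw [gN, norm_mul]
      have hcoef : ‖(1 / (Nat.factorial (N - 1) : ℂ))‖ = 1 / (Nat.factorial (N - 1) : ℝ) := by
        simp
      rw [hcoef]
      apply mul_le_mul_of_nonneg_left _ (by positivity)
      calc ‖∫ x in Ioc t 1, (x : ℂ) ^ c * ((x : ℂ) - (t : ℂ)) ^ (N - 1)‖
          ≤ ∫ x in Ioc t 1, x ^ b := hint
        _ = (1 - t ^ (b + 1)) / (b + 1) := hval
        _ ≤ (-(b + 1))⁻¹ * t ^ (b + 1) := hstep
    -- conclude
    have hgint : IntegrableOn (fun t : ℝ => (1 / (Nat.factorial (N - 1) : ℝ)) *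
        ((-(b + 1))⁻¹ * t ^ (b + 1))) (Ioc 0 1) := by
      have h1 : IntegrableOn (fun t : ℝ => t ^ (b + 1)) (Ioc 0 1) :=
        (intervalIntegrable_iff_integrableOn_Ioc_of_le zero_le_one).1
          (intervalIntegral.intervalIntegrable_rpow' (by linarith))
      exact (h1.const_mul _).const_mul _
    apply Integrable.mono' hgint hmeas
    filter_upwards [ae_restrict_mem measurableSet_Ioc] with t ht
    exact hbound t ht
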